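/- arXiv:1409.0198 — 2 statements merged into one kernel-verified Lean document; each statement's English description precedes it below -/
import Mathlib

section
/- For every positive integer k, the following identity holds: ∑_{m=1}^∞ 1/sinh(mπ)^{2k} = (1/π) ∑_{m=1}^∞ lim_{N→∞} ∑_{-N≤n≤N} (-1)^n / (sinh(mπ)^{2k-1}(m+ni)). -/
open Complex Filter

open scoped Real

namespace SinhPowerAux

noncomputable def f (a : ℝ) (x : ℝ) : ℂ :=
  (Complex.exp (2 * (π : ℂ) * a * (x - 1/2)) + Complex.exp (-(2 * (π : ℂ) * a) * (x - 1/2))) / 2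

lemma f_cont (a : ℝ) : Continuous (f a) := by
  unfold f; fun_prop

lemma f_period (a : ℝ) : f a 0 = f a (0 + 1) := by
  unfold f
  norm_num
  rw [add_comm]

lemma prod_eq (a : ℝ) (n : ℤ) :
    ((a : ℂ) + n * I) * ((a : ℂ) - n * I) = (a : ℂ) ^ 2 + (n : ℂ) ^ 2 := by
  linear_combination (-(n : ℂ) ^ 2) * Complex.I_sq

lemma add_ne (a : ℝ) (ha : 0 < a) (n : ℤ) : ((a : ℂ) + n * I) ≠ 0 := by
  intro h
  rw [Complex.ext_iff] at h
  simp at h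
  exact ha.ne' h.1

lemma sub_ne (a : ℝ) (ha : 0 < a) (n : ℤ) : ((a : ℂ) - n * I) ≠ 0 := by
  intro h
  rw [Complex.ext_iff] at h
  simp [sub_eq_zero] at h
  exact ha.ne' h.1

lemma sq_add_ne (a : ℝ) (ha : 0 < a) (n : ℤ) : ((a : ℂ) ^ 2 + (n : ℂ) ^ 2) ≠ 0 := by
  rw [← prod_eq]
  exact mul_ne_zero (add_ne a ha n) (sub_ne a ha n)

lemma alg (u v w : ℂ) (hu : u ≠ 0) (hv : v ≠ 0) (hw : w ≠ 0) :
    u⁻¹ / 2 * ((u * u - 1) / v) + u / 2 * (((u * u)⁻¹ - 1) / w)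
      = (u - u⁻¹) / 2 * (1 / v - 1 / w) := by
  have A : u⁻¹ * (u * u - 1) = u - u⁻¹ := by
    rw [mul_sub, mul_one, ← mul_assoc, inv_mul_cancel₀ hu, one_mul]
  have B : u * ((u * u)⁻¹ - 1) = u⁻¹ - u := by
    rw [mul_sub, mul_one, mul_inv, ← mul_assoc, mul_inv_cancel₀ hu, one_mul]
  calc u⁻¹ / 2 * ((u * u - 1) / v) + u / 2 * (((u * u)⁻¹ - 1) / w)
      = (u⁻¹ * (u * u - 1)) / 2 * (1 / v) + (u * ((u * u)⁻¹ - 1)) / 2 * (1 / w) := by ring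
    _ = (u - u⁻¹) / 2 * (1 / v) + (u⁻¹ - u) / 2 * (1 / w) := by rw [A, B]
    _ = (u - u⁻¹) / 2 * (1 / v - 1 / w) := by ring

lemma coeff (a : ℝ) (ha : 0 < a) (n : ℤ) :
    fourierCoeffOn (zero_lt_one' ℝ) (f a) n =
      (Real.sinh (π * a) : ℂ) * ((a : ℂ) / (π * ((a : ℂ) ^ 2 + (n : ℂ) ^ 2))) := by
  have hπ := Real.pi_pos
  set c1 : ℂ := 2 * π * a - 2 * π * I * n with hc1def
  set c2 : ℂ := -(2 * π * a) - 2 * π * I * n with hc2def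
  have hc1 : c1 ≠ 0 := by
    intro h
    rw [hc1def, Complex.ext_iff] at h
    simp [Real.pi_ne_zero, ha.ne'] at h
  have hc2 : c2 ≠ 0 := by
    intro h
    rw [hc2def, Complex.ext_iff] at h
    simp [Real.pi_ne_zero, ha.ne'] at h
  have key : ∀ x : ℝ, (fourier (-n) (x : AddCircle (1 - 0 : ℝ))) • f a x
      = Complex.exp (-(π * a)) / 2 * Complex.exp (c1 * x)
        + Complex.exp ((π : ℂ) * a) / 2 * Complex.exp (c2 * x) := by
    intro x
    rw [smul_eq_mul, fourier_coe_apply]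
    unfold f
    rw [← mul_div_assoc, mul_add, ← Complex.exp_add, ← Complex.exp_add,
      div_mul_eq_mul_div, div_mul_eq_mul_div, ← Complex.exp_add, ← Complex.exp_add,
      ← add_div]
    congr 2 <;> exact congrArg Complex.exp (by simp only [hc1def, hc2def]; push_cast; ring)
  rw [fourierCoeffOn_eq_integral]
  simp_rw [key]
  rw [intervalIntegral.integral_add
      (Continuous.intervalIntegrable (by fun_prop) _ _)
      (Continuous.intervalIntegrable (by fun_prop) _ _),
    intervalIntegral.integral_const_mul, intervalIntegral.integral_const_mul,
    integral_exp_mul_complex hc1, integral_exp_mul_complex hc2]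
  have e1 : Complex.exp (c1 * (1 : ℝ)) = Complex.exp (2 * π * a) := by
    rw [show c1 * (1:ℝ) = 2 * (π:ℂ) * a + (-n : ℤ) * (2 * π * I) by push_cast; rw [hc1def]; ring,
      Complex.exp_add, Complex.exp_int_mul_two_pi_mul_I, mul_one]
  have e2 : Complex.exp (c2 * (1 : ℝ)) = Complex.exp (-(2 * (π:ℂ) * a)) := by
    rw [show c2 * (1:ℝ) = -(2 * (π:ℂ) * a) + (-n : ℤ) * (2 * π * I) by push_cast; rw [hc2def]; ring,
      Complex.exp_add, Complex.exp_int_mul_two_pi_mul_I, mul_one]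
  rw [e1, e2]
  simp only [sub_zero, one_div, inv_one, one_smul]
  set u : ℂ := Complex.exp ((π : ℂ) * a) with hu
  have hu0 : u ≠ 0 := Complex.exp_ne_zero _
  have h2 : Complex.exp (2 * (π:ℂ) * a) = u * u := by
    rw [hu, ← Complex.exp_add]; exact congrArg Complex.exp (by ring)
  have h3 : Complex.exp (-(2 * (π:ℂ) * a)) = (u * u)⁻¹ := by
    rw [hu, ← Complex.exp_add, ← Complex.exp_neg]; exact congrArg Complex.exp (by ring)
  have h4 : Complex.exp (-((π:ℂ) * a)) = u⁻¹ := by rw [hu, ← Complex.exp_neg]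
  have h5 : ((Real.sinh (π * a) : ℝ) : ℂ) = (u - u⁻¹) / 2 := by
    rw [hu, ← Complex.exp_neg, Complex.ofReal_sinh]
    simp only [Complex.sinh]
    push_cast
    ring
  rw [h2, h3, h4, h5, show ((a:ℂ)^2 + (n:ℂ)^2) = ((a:ℂ) + n * I) * ((a:ℂ) - n * I)
      from (prod_eq a n).symm]
  have hπ' : (π : ℂ) ≠ 0 := Complex.ofReal_ne_zero.mpr Real.pi_ne_zero
  have hc1' : (2 * (π:ℂ) * a - 2 * (π:ℂ) * I * n) ≠ 0 := by rw [← hc1def]; exact hc1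
  have hc2' : (-(2 * (π:ℂ) * a) - 2 * (π:ℂ) * I * n) ≠ 0 := by rw [← hc2def]; exact hc2
  have key2 : (1:ℂ)/c1 - 1/c2 = (a:ℂ) / ((π:ℂ) * (((a:ℂ) + n * I) * ((a:ℂ) - n * I))) := by
    rw [hc1def, hc2def, div_sub_div _ _ hc1' hc2',
      div_eq_div_iff (mul_ne_zero hc1' hc2')
        (mul_ne_zero hπ' (mul_ne_zero (add_ne a ha n) (sub_ne a ha n)))]
    ring
  rw [← key2]
  simp only [Complex.ofReal_zero, mul_zero, Complex.exp_zero]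
  exact alg u c1 c2 hu0 hc1 hc2
lemma hneg (n : ℤ) : (-1:ℂ) ^ (-n) = (-1:ℂ) ^ n := by
  rw [zpow_neg, ← inv_zpow, inv_neg, inv_one]

lemma hasSum_alt (a : ℝ) (ha : 0 < a) :
    HasSum (fun n : ℤ => (-1 : ℂ) ^ n * ((a : ℂ) / ((a:ℂ) ^ 2 + (n:ℂ) ^ 2)))
      ((π : ℂ) / (Real.sinh (π * a) : ℂ)) := by
  haveI : Fact ((0:ℝ) < 1) := ⟨one_pos⟩
  have hπ' : (π : ℂ) ≠ 0 := Complex.ofReal_ne_zero.mpr Real.pi_ne_zero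
  have hsne : (Real.sinh (π * a) : ℂ) ≠ 0 :=
    Complex.ofReal_ne_zero.mpr (Real.sinh_pos_iff.mpr (by positivity : 0 < π * a)).ne'
  set F : C(AddCircle (1:ℝ), ℂ) :=
    ⟨AddCircle.liftIco 1 0 (f a),
      AddCircle.liftIco_continuous (f_period a) (f_cont a).continuousOn⟩ with hF
  have hco : ∀ n : ℤ, fourierCoeff (F : AddCircle (1:ℝ) → ℂ) n =
      (Real.sinh (π * a) : ℂ) * ((a:ℂ) / ((π:ℂ) * ((a:ℂ)^2 + (n:ℂ)^2))) := by
    intro n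
    have h1 : fourierCoeff (F : AddCircle (1:ℝ) → ℂ) n
        = fourierCoeffOn (lt_add_of_pos_right (0:ℝ) one_pos) (f a) n :=
      fourierCoeff_liftIco_eq (f a) n
    simp only [zero_add] at h1
    rw [h1, coeff a ha n]
  have hbound : ∀ n : ℤ, n ≠ 0 → ‖fourierCoeff (F : AddCircle (1:ℝ) → ℂ) n‖
      ≤ (Real.sinh (π * a) * a / π) * (1 / (n:ℝ)^2) := by
    intro n hn0
    have hn2 : (1:ℝ) ≤ (n:ℝ)^2 := by
      have h1 : (1:ℤ) ≤ n^2 := by nlinarith [Int.one_le_abs hn0, _root_.sq_abs n, abs_nonneg n]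
      exact_mod_cast h1
    have hnR : ((n:ℝ)) ≠ 0 := by exact_mod_cast hn0
    rw [hco n]
    have hcast : ((Real.sinh (π*a) : ℂ) * ((a:ℂ)/((π:ℂ) * ((a:ℂ)^2+(n:ℂ)^2))))
        = ((Real.sinh (π*a) * (a/(π * (a^2+(n:ℝ)^2))) : ℝ) : ℂ) := by push_cast; ring
    rw [hcast, Complex.norm_real, Real.norm_eq_abs,
      _root_.abs_of_nonneg (show (0:ℝ) ≤ Real.sinh (π*a) * (a/(π * (a^2+(n:ℝ)^2))) from by positivity)]
    rw [show Real.sinh (π*a) * a / π * (1/(n:ℝ)^2)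
        = Real.sinh (π*a) * (a/(π * (n:ℝ)^2)) by field_simp]
    gcongr
    nlinarith [sq_nonneg a]
  have hsummand : Summable (fun n : ℤ => fourierCoeff (F : AddCircle (1:ℝ) → ℂ) n) := by
    apply Summable.of_norm_bounded_eventually
      (g := fun n : ℤ => (Real.sinh (π * a) * a / π) * (1 / (n:ℝ)^2))
      ((Real.summable_one_div_int_pow.mpr one_lt_two).mul_left _)
    rw [Filter.eventually_cofinite]
    apply Set.Finite.subset (Set.finite_singleton (0:ℤ))
    intro n hn
    simp only [Set.mem_setOf_eq] at hn
    simp only [Set.mem_singleton_iff]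
    by_contra hn0
    exact hn (hbound n hn0)
  have hsum := has_pointwise_sum_fourier_series_of_summable hsummand (((1:ℝ)/2 : ℝ) : AddCircle (1:ℝ))
  have hval : F ((((1:ℝ)/2 : ℝ)) : AddCircle (1:ℝ)) = 1 := by
    show AddCircle.liftIco 1 0 (f a) _ = 1
    rw [AddCircle.liftIco_coe_apply (by rw [zero_add]; constructor <;> norm_num)]
    unfold f
    norm_num
  have hfour : ∀ n : ℤ, fourier n ((((1:ℝ)/2 : ℝ)) : AddCircle (1:ℝ)) = (-1:ℂ)^n := by
    intro n
    rw [fourier_coe_apply]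
    push_cast
    rw [show (2:ℂ) * (π:ℂ) * I * (n:ℂ) * (1/2) / 1 = (n:ℂ) * ((π:ℂ) * I) by ring,
      Complex.exp_int_mul, Complex.exp_pi_mul_I]
  rw [hval] at hsum
  simp_rw [hco, hfour, smul_eq_mul] at hsum
  simp_rw [div_mul_eq_div_div_swap] at hsum
  rw [show (fun i : ℤ => (Real.sinh (π * a) : ℂ) * ((a:ℂ) / ((a:ℂ)^2+(i:ℂ)^2) / (π:ℂ)) * (-1:ℂ)^i)
      = fun n : ℤ => ((Real.sinh (π * a) : ℂ) / (π:ℂ)) * ((-1:ℂ)^n * ((a:ℂ)/((a:ℂ)^2+(n:ℂ)^2)))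
      from funext fun n => by ring] at hsum
  have h2 := hsum.mul_left ((π : ℂ) / (Real.sinh (π * a) : ℂ))
  rw [mul_one] at h2
  have hcancel : ((π : ℂ) / (Real.sinh (π * a) : ℂ)) * ((Real.sinh (π * a) : ℂ) / (π:ℂ)) = 1 := by
    rw [div_mul_div_comm, mul_comm ((Real.sinh (π * a) : ℂ)) ((π:ℂ))]
    exact div_self (mul_ne_zero hπ' hsne)
  rw [show (fun i : ℤ => ((π : ℂ) / (Real.sinh (π * a) : ℂ))
        * (((Real.sinh (π * a) : ℂ) / (π:ℂ)) * ((-1:ℂ)^i * ((a:ℂ)/((a:ℂ)^2+(i:ℂ)^2)))))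
      = fun n : ℤ => (-1:ℂ)^n * ((a:ℂ)/((a:ℂ)^2+(n:ℂ)^2))
      from funext fun n => by rw [← mul_assoc, hcancel, one_mul]] at h2
  exact h2

lemma sym_eq (a : ℝ) (ha : 0 < a) (N : ℕ) :
    ∑ n ∈ Finset.Icc (-(N:ℤ)) (N:ℤ), (-1:ℂ)^n * ((a:ℂ) / ((a:ℂ)^2 + (n:ℂ)^2))
      = ∑ n ∈ Finset.Icc (-(N:ℤ)) (N:ℤ), (-1:ℂ)^n / ((a:ℂ) + n * I) := by
  have himg : (Finset.Icc (-(N:ℤ)) (N:ℤ)).image (fun n => -n) = Finset.Icc (-(N:ℤ)) (N:ℤ) := by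
    ext x
    simp only [Finset.mem_image, Finset.mem_Icc]
    constructor
    · rintro ⟨b, hb, rfl⟩; omega
    · intro hx; exact ⟨-x, by omega, by omega⟩
  have reflect : ∑ n ∈ Finset.Icc (-(N:ℤ)) (N:ℤ), (-1:ℂ)^n / ((a:ℂ) + n * I)
      = ∑ n ∈ Finset.Icc (-(N:ℤ)) (N:ℤ), (-1:ℂ)^n / ((a:ℂ) - n * I) := by
    conv_lhs => rw [← himg]
    rw [Finset.sum_image (by intro x _ y _ h; exact neg_inj.mp h)]
    apply Finset.sum_congr rfl
    intro n _
    rw [hneg]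
    congr 1
    push_cast
    ring
  have combine : ∀ n : ℤ, (-1:ℂ)^n / ((a:ℂ) + n * I) + (-1:ℂ)^n / ((a:ℂ) - n * I)
      = 2 * ((-1:ℂ)^n * ((a:ℂ) / ((a:ℂ)^2 + (n:ℂ)^2))) := by
    intro n
    rw [div_add_div _ _ (add_ne a ha n) (sub_ne a ha n), prod_eq]
    have := sq_add_ne a ha n
    field_simp
    ring
  have h2 : (2:ℂ) * ∑ n ∈ Finset.Icc (-(N:ℤ)) (N:ℤ), (-1:ℂ)^n * ((a:ℂ)/((a:ℂ)^2+(n:ℂ)^2))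
      = 2 * ∑ n ∈ Finset.Icc (-(N:ℤ)) (N:ℤ), (-1:ℂ)^n / ((a:ℂ) + n * I) := by
    rw [Finset.mul_sum]
    simp_rw [← combine]
    rw [Finset.sum_add_distrib, ← reflect, two_mul]
  exact mul_left_cancel₀ (two_ne_zero) h2

lemma tendsto_sym (a : ℝ) (ha : 0 < a) :
    Tendsto (fun N : ℕ => ∑ n ∈ Finset.Icc (-(N:ℤ)) (N:ℤ), (-1:ℂ)^n / ((a:ℂ) + n * I)) atTop
      (nhds ((π : ℂ) / (Real.sinh (π * a) : ℂ))) := by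
  have hs := hasSum_alt a ha
  have hmono : Monotone (fun N : ℕ => Finset.Icc (-(N:ℤ)) (N:ℤ)) := by
    intro p q h
    apply Finset.Icc_subset_Icc <;> simp <;> exact_mod_cast h
  have hexh : ∀ x : ℤ, ∃ N : ℕ, x ∈ Finset.Icc (-(N:ℤ)) (N:ℤ) := by
    intro x
    exact ⟨x.natAbs, by simp only [Finset.mem_Icc]; omega⟩
  have hIcc := tendsto_atTop_finset_of_monotone hmono hexh
  have hs' : Tendsto (fun s : Finset ℤ => ∑ n ∈ s, (-1:ℂ)^n * ((a:ℂ) / ((a:ℂ)^2 + (n:ℂ)^2)))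
      atTop (nhds ((π : ℂ) / (Real.sinh (π * a) : ℂ))) := hs
  exact (hs'.comp hIcc).congr (fun N => sym_eq a ha N)

end SinhPowerAux

theorem sinh_power_sum_identity (k : ℕ) (hk : 0 < k) :
    ∃ g : ℕ → ℂ,
      (∀ m : ℕ,
          Tendsto (fun N : ℕ =>
              ∑ n ∈ Finset.Icc (-(N : ℤ)) (N : ℤ),
                (-1 : ℂ) ^ n /
                  (Complex.sinh (((m : ℂ) + 1) * Real.pi) ^ (2 * k - 1) *
                    ((m : ℂ) + 1 + (n : ℂ) * Complex.I)))
            atTop (nhds (g m))) ∧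
        (∑' m : ℕ, 1 / Complex.sinh (((m : ℂ) + 1) * Real.pi) ^ (2 * k)) =
          1 / (Real.pi : ℂ) * ∑' m : ℕ, g m := by
  refine ⟨fun m => (Real.pi : ℂ) / Complex.sinh (((m:ℂ)+1) * Real.pi) ^ (2*k), fun m => ?_, ?_⟩
  · have ha : (0:ℝ) < (m:ℝ) + 1 := by positivity
    have hC : Complex.sinh (((m:ℂ)+1) * Real.pi) = ((Real.sinh (Real.pi * ((m:ℝ)+1)) : ℝ) : ℂ) := by
      rw [Complex.ofReal_sinh]
      push_cast
      ring_nf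
    have hCne : Complex.sinh (((m:ℂ)+1) * Real.pi) ≠ 0 := by
      rw [hC]
      exact_mod_cast (Real.sinh_pos_iff.mpr (by positivity)).ne'
    have ht := (SinhPowerAux.tendsto_sym ((m:ℝ)+1) ha).const_mul
      ((Complex.sinh (((m:ℂ)+1) * Real.pi) ^ (2*k-1))⁻¹)
    have hfun : (fun N : ℕ => ∑ n ∈ Finset.Icc (-(N : ℤ)) (N : ℤ),
        (-1 : ℂ) ^ n / (Complex.sinh (((m : ℂ) + 1) * Real.pi) ^ (2 * k - 1)
          * ((m : ℂ) + 1 + (n : ℂ) * Complex.I)))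
        = fun N : ℕ => (Complex.sinh (((m:ℂ)+1) * Real.pi) ^ (2*k-1))⁻¹
          * ∑ n ∈ Finset.Icc (-(N:ℤ)) (N:ℤ), (-1:ℂ)^n / ((((m:ℝ)+1 : ℝ):ℂ) + n * Complex.I) := by
      funext N
      rw [Finset.mul_sum]
      apply Finset.sum_congr rfl
      intro n _
      rw [show ((((m:ℝ)+1 : ℝ)):ℂ) + (n:ℂ) * Complex.I = ((m:ℂ)+1+(n:ℂ)*Complex.I) by
          push_cast; ring,
        div_mul_eq_div_div_swap, inv_mul_eq_div]
    have hval : (Complex.sinh (((m:ℂ)+1) * Real.pi) ^ (2*k-1))⁻¹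
          * ((Real.pi : ℂ) / ((Real.sinh (Real.pi * ((m:ℝ)+1)) : ℝ) : ℂ))
        = (Real.pi : ℂ) / Complex.sinh (((m:ℂ)+1) * Real.pi) ^ (2*k) := by
      conv_rhs => rw [show 2*k = (2*k-1)+1 from by omega]
      rw [pow_succ, hC, div_mul_eq_div_div_swap, inv_mul_eq_div]
    rw [hfun]
    rw [hval] at ht
    exact ht
  · have hπ' : (Real.pi : ℂ) ≠ 0 := Complex.ofReal_ne_zero.mpr Real.pi_ne_zero
    have : ∀ m : ℕ, (Real.pi : ℂ) / Complex.sinh (((m:ℂ)+1) * Real.pi) ^ (2*k)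
        = (Real.pi : ℂ) * (1 / Complex.sinh (((m:ℂ)+1) * Real.pi) ^ (2*k)) := by
      intro m; rw [mul_one_div]
    simp_rw [this]
    rw [tsum_mul_left, ← mul_assoc, one_div, inv_mul_cancel₀ hπ', one_mul]
end

section
/- For every positive integer k and complex q with |q| < 1, the identity ∑_{m∈ℤ} 1/((q^{2m+1}+q^{-2m-1})(q^{2(m-k)+1}+q^{-2(m-k)-1})) = -k/(q^{2k}-q^{-2k}) holds. -/
open Filter Topology Finset

private theorem alg_core (u v : ℂ) (hu : u ≠ 0) (hv : v ≠ 0) (h1 : 1 + u^2 ≠ 0)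
    (h2 : u^2 + v^2 ≠ 0) (hV : v^2 - 1 ≠ 0) :
    1/((u + u⁻¹)*(u*v⁻¹ + u⁻¹*v)) = (1/(1+(u*v⁻¹)^2) - 1/(1+u^2))/(v - v⁻¹) := by
  rw [show u + u⁻¹ = (1+u^2)/u by field_simp; ring,
      show u*v⁻¹ + u⁻¹*v = (u^2+v^2)/(u*v) by field_simp,
      show 1+(u*v⁻¹)^2 = (u^2+v^2)/v^2 by field_simp; ring,
      show v - v⁻¹ = (v^2-1)/v by field_simp]
  field_simp
  ring

private theorem hasSum_of_tendsto_partial {g : ℕ → ℂ} {L : ℂ} (hg : Summable g)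
    (h : Tendsto (fun N => ∑ i ∈ Finset.range N, g i) atTop (𝓝 L)) : HasSum g L := by
  have h3 := hg.hasSum
  have h2 := h3.tendsto_sum_nat
  rwa [tendsto_nhds_unique h2 h] at h3

private theorem diff_bound (a b : ℂ) {s : ℝ} (ha : ‖a‖ ≤ s) (hb : ‖b‖ ≤ s)
    (hs : s < 1) (h1 : 1 + a ≠ 0) (h2 : 1 + b ≠ 0) :
    ‖1/(1+a) - 1/(1+b)‖ ≤ (‖a‖ + ‖b‖)/(1-s)^2 := by
  have hs0 : 0 < 1 - s := by linarith
  have e : 1/(1+a) - 1/(1+b) = (b - a)/((1+a)*(1+b)) := by field_simp; ring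
  have ha' : 1 - s ≤ ‖1+a‖ := by
    have h := norm_sub_norm_le (1:ℂ) (-a)
    simp only [norm_neg, norm_one, sub_neg_eq_add] at h
    linarith
  have hb' : 1 - s ≤ ‖1+b‖ := by
    have h := norm_sub_norm_le (1:ℂ) (-b)
    simp only [norm_neg, norm_one, sub_neg_eq_add] at h
    linarith
  rw [e, norm_div, norm_mul]
  apply div_le_div₀ (by positivity) _ (by positivity)
  · calc (1-s)^2 = (1-s)*(1-s) := sq (1-s) ▸ rfl
      _ ≤ ‖1+a‖ * ‖1+b‖ := by
          apply mul_le_mul ha' hb' (le_of_lt hs0) (norm_nonneg _)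
  · calc ‖b - a‖ ≤ ‖b‖ + ‖a‖ := by
          simpa using norm_sub_le b a
      _ = ‖a‖ + ‖b‖ := by ring

theorem key_q_identity (k : ℕ) (hk : 0 < k) (q : ℂ) (hq0 : q ≠ 0) (hq : ‖q‖ < 1) :
    (∑' m : ℤ,
        1 / ((q ^ (2 * m + 1) + q ^ (-2 * m - 1)) *
          (q ^ (2 * (m - (k : ℤ)) + 1) + q ^ (-2 * (m - (k : ℤ)) - 1)))) =
      -(k : ℂ) / (q ^ (2 * (k : ℤ)) - q ^ (-2 * (k : ℤ))) := by
  set r := ‖q‖ with hrdef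
  have hr0 : 0 < r := norm_pos_iff.mpr hq0
  have habs : ∀ n : ℤ, n ≠ 0 → ‖q ^ n‖ ≠ 1 := by
    intro n hn
    rw [norm_zpow]
    rcases lt_or_gt_of_ne hn with h | h
    · exact ne_of_gt (one_lt_zpow_of_neg₀ hr0 hq h)
    · exact ne_of_lt (zpow_lt_one₀ hr0 hq h)
  have hne : ∀ n : ℤ, n ≠ 0 → 1 + q ^ n ≠ 0 := by
    intro n hn h
    apply habs n hn
    have h2 : q ^ n = -1 := by linear_combination h
    rw [h2]
    simp
  -- the building block f
  set f : ℤ → ℂ := fun m => 1/(1 + q ^ (4*m+2)) with hfdef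
  have hfne : ∀ m : ℤ, 1 + q ^ (4*m+2) ≠ 0 := fun m => hne _ (by omega)
  have hflip : ∀ m : ℤ, f m = 1 - 1/(1 + q ^ (-4*m-2)) := by
    intro m
    have ht : q ^ (-4*m-2) = (q ^ (4*m+2))⁻¹ := by
      rw [show -4*m-2 = -(4*m+2) by ring, zpow_neg]
    have h1 := hfne m
    have h2 : q ^ (4*m+2) ≠ 0 := zpow_ne_zero _ hq0
    have h3 : 1 + (q ^ (4*m+2))⁻¹ ≠ 0 := by
      intro h
      apply h1
      have h4 := congrArg (· * q ^ (4*m+2)) h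
      simp only [add_mul, one_mul, inv_mul_cancel₀ h2, zero_mul] at h4
      linear_combination h4
    rw [hfdef]
    simp only
    rw [ht, eq_sub_iff_add_eq, div_add_div _ _ h1 h3, div_eq_one_iff_eq (mul_ne_zero h1 h3)]
    field_simp
    ring
  -- V nonzero
  set V : ℂ := q ^ (2*(k:ℤ)) - q ^ (-2*(k:ℤ)) with hVdef
  have hk0 : (k:ℤ) ≠ 0 := by exact_mod_cast hk.ne'
  have hq4k : q ^ (4*(k:ℤ)) ≠ 1 := by
    intro h
    apply habs (4*(k:ℤ)) (by omega)
    rw [h]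
    simp
  have hv2 : (q ^ (2*(k:ℤ)))^2 = q ^ (4*(k:ℤ)) := by
    rw [sq, ← zpow_add₀ hq0]
    congr 1
    ring
  have hvinv : q ^ (-2*(k:ℤ)) = (q ^ (2*(k:ℤ)))⁻¹ := by
    rw [show -2*(k:ℤ) = -(2*(k:ℤ)) by ring, zpow_neg]
  have hVne : V ≠ 0 := by
    rw [hVdef, hvinv]
    intro h
    have h2 : q ^ (2*(k:ℤ)) = (q ^ (2*(k:ℤ)))⁻¹ := sub_eq_zero.mp h
    apply hq4k
    rw [← hv2, sq]
    nth_rewrite 2 [h2]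
    exact mul_inv_cancel₀ (zpow_ne_zero _ hq0)
  -- the telescoping summand d
  set d : ℤ → ℂ := fun m => f (m-1) - f m with hddef
  -- geometric facts
  have hr4 : r^4 < 1 := pow_lt_one₀ hr0.le hq (by norm_num)
  have hs2 : r^2 < 1 := pow_lt_one₀ hr0.le hq (by norm_num)
  have hs20 : (0:ℝ) < 1 - r^2 := by linarith
  have hzabs : ∀ n : ℤ, ‖q ^ n‖ = r ^ n := fun n => norm_zpow q n
  have habs_le : ∀ n : ℤ, 2 ≤ n → ‖q ^ n‖ ≤ r^2 := by
    intro n hn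
    rw [hzabs]
    calc r ^ n ≤ r ^ (2:ℤ) := zpow_le_zpow_right_of_le_one₀ hr0 hq.le hn
      _ = r ^ 2 := by rw [show (2:ℤ) = ((2:ℕ):ℤ) from rfl, zpow_natCast]
  have hrpow : ∀ n : ℕ, (r:ℝ) ^ (4*(n:ℤ)-2) = (r^4)^n / r^2 := by
    intro n
    rw [zpow_sub₀ hr0.ne', show (4*(n:ℤ)) = ((4*n : ℕ) : ℤ) by push_cast; ring,
      zpow_natCast, pow_mul, show (2:ℤ) = ((2:ℕ):ℤ) from rfl, zpow_natCast]
  have hrpow2 : ∀ n : ℕ, (r:ℝ) ^ (4*(n:ℤ)+2) = (r^4)^n * r^2 := by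
    intro n
    rw [zpow_add₀ hr0.ne', show (4*(n:ℤ)) = ((4*n : ℕ) : ℤ) by push_cast; ring,
      zpow_natCast, pow_mul, show (2:ℤ) = ((2:ℕ):ℤ) from rfl, zpow_natCast]
  -- tendsto of q ^ (4n+c) to zero
  have htend0 : ∀ c : ℤ, Tendsto (fun n : ℕ => q ^ (4*(n:ℤ)+c)) atTop (𝓝 0) := by
    intro c
    have he : ∀ n : ℕ, q ^ (4*(n:ℤ)+c) = q ^ c * (q^4)^n := by
      intro n
      rw [zpow_add₀ hq0, show (4*(n:ℤ)) = ((4*n : ℕ) : ℤ) by push_cast; ring,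
        zpow_natCast, pow_mul, mul_comm]
    simp only [he]
    rw [show (0:ℂ) = q ^ c * 0 by ring]
    apply Tendsto.const_mul
    apply tendsto_pow_atTop_nhds_zero_of_norm_lt_one
    rw [norm_pow]
    exact hr4
  -- HasSum for the positive part
  have hpos : HasSum (fun n : ℕ => d n) (f (-1) - 1) := by
    refine hasSum_of_tendsto_partial ?_ ?_
    · -- summability
      apply Summable.of_norm_bounded_eventually_nat
        (g := fun n => (2/(r^2*(1-r^2)^2)) * (r^4)^n)
        ((summable_geometric_of_lt_one (by positivity) hr4).mul_left _)
      filter_upwards [eventually_ge_atTop 1] with n hn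
      have ed : d (n:ℤ) = 1/(1 + q ^ (4*(n:ℤ)-2)) - 1/(1 + q ^ (4*(n:ℤ)+2)) := by
        rw [hddef]
        simp only [hfdef]
        congr 3
        ring
      have ha : ‖q ^ (4*(n:ℤ)-2)‖ ≤ r^2 := habs_le _ (by omega)
      have hb : ‖q ^ (4*(n:ℤ)+2)‖ ≤ r^2 := habs_le _ (by omega)
      have h1 : 1 + q ^ (4*(n:ℤ)-2) ≠ 0 := hne _ (by omega)
      have h2 : 1 + q ^ (4*(n:ℤ)+2) ≠ 0 := hne _ (by omega)
      have key := diff_bound _ _ ha hb hs2 h1 h2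
      rw [ed]
      refine key.trans ?_
      have hmono : (r:ℝ) ^ (4*(n:ℤ)+2) ≤ r ^ (4*(n:ℤ)-2) :=
        zpow_le_zpow_right_of_le_one₀ hr0 hq.le (by omega)
      calc (‖q ^ (4*(n:ℤ)-2)‖ + ‖q ^ (4*(n:ℤ)+2)‖)/(1-r^2)^2
          ≤ (2 * (r ^ (4*(n:ℤ)-2)))/(1-r^2)^2 := by
            rw [hzabs, hzabs]
            gcongr
            linarith
        _ = (2/(r^2*(1-r^2)^2)) * (r^4)^n := by
            rw [hrpow n]
            field_simp
    · -- limit of partial sums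
      have hptel : ∀ N : ℕ, ∑ i ∈ Finset.range N, d i
          = f (-1) - f ((N:ℤ)-1) := by
        intro N
        have h := Finset.sum_range_sub' (fun j : ℕ => f ((j:ℤ)-1)) N
        rw [show f (-1) = f (((0:ℕ):ℤ)-1) by norm_num, ← h]
        apply Finset.sum_congr rfl
        intro j _
        simp only [hddef]
        have c1 : (j:ℤ) - 1 - 1 + 1 = (j:ℤ) - 1 := by ring
        have c2 : (j:ℤ) = ((j+1 : ℕ) : ℤ) - 1 := by push_cast; ring
        rw [← c2]
      simp only [hptel]
      rw [show f (-1) - 1 = f (-1) - 1/(1+0) by norm_num]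
      apply Tendsto.const_sub
      have hx : Tendsto (fun N : ℕ => q ^ (4*((N:ℤ)-1)+2)) atTop (𝓝 0) := by
        have hfe : (fun N : ℕ => q ^ (4*((N:ℤ)-1)+2)) = (fun N : ℕ => q ^ (4*(N:ℤ)+(-2))) := by
          funext n
          congr 1
          ring
        rw [hfe]
        exact htend0 (-2)
      have hf1 : ∀ N : ℕ, f ((N:ℤ)-1) = 1/(1 + q ^ (4*((N:ℤ)-1)+2)) := by
        intro N; rw [hfdef]
      simp only [hf1]
      apply Tendsto.div tendsto_const_nhds (tendsto_const_nhds.add hx)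
      norm_num
  -- HasSum for the negative part
  have hneg : HasSum (fun n : ℕ => d (-((n:ℤ)+1))) (0 - f (-1)) := by
    have edneg : ∀ n : ℕ, d (-((n:ℤ)+1)) = 1/(1 + q ^ (4*(n:ℤ)+2)) - 1/(1 + q ^ (4*(n:ℤ)+6)) := by
      intro n
      rw [hddef]
      simp only
      rw [hflip (-((n:ℤ)+1) - 1), hflip (-((n:ℤ)+1))]
      rw [show -4*(-((n:ℤ)+1) - 1)-2 = 4*(n:ℤ)+6 by ring,
          show -4*(-((n:ℤ)+1))-2 = 4*(n:ℤ)+2 by ring]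
      ring
    refine hasSum_of_tendsto_partial ?_ ?_
    · apply Summable.of_norm_bounded_eventually_nat
        (g := fun n => (2*r^2/((1-r^2)^2)) * (r^4)^n)
        ((summable_geometric_of_lt_one (by positivity) hr4).mul_left _)
      filter_upwards with n
      have ha : ‖q ^ (4*(n:ℤ)+2)‖ ≤ r^2 := habs_le _ (by omega)
      have hb : ‖q ^ (4*(n:ℤ)+6)‖ ≤ r^2 := habs_le _ (by omega)
      have h1 : 1 + q ^ (4*(n:ℤ)+2) ≠ 0 := hne _ (by omega)
      have h2 : 1 + q ^ (4*(n:ℤ)+6) ≠ 0 := hne _ (by omega)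
      have key := diff_bound _ _ ha hb hs2 h1 h2
      rw [edneg n]
      refine key.trans ?_
      have hmono : (r:ℝ) ^ (4*(n:ℤ)+6) ≤ r ^ (4*(n:ℤ)+2) :=
        zpow_le_zpow_right_of_le_one₀ hr0 hq.le (by omega)
      calc (‖q ^ (4*(n:ℤ)+2)‖ + ‖q ^ (4*(n:ℤ)+6)‖)/(1-r^2)^2
          ≤ (2 * (r ^ (4*(n:ℤ)+2)))/(1-r^2)^2 := by
            rw [hzabs, hzabs]
            gcongr
            linarith
        _ = (2*r^2/((1-r^2)^2)) * (r^4)^n := by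
            rw [hrpow2 n]
            field_simp
    · have hptel : ∀ N : ℕ, ∑ i ∈ Finset.range N, d (-((i:ℤ)+1))
          = f (-(N:ℤ)-1) - f (-1) := by
        intro N
        have h := Finset.sum_range_sub (fun j : ℕ => f (-(j:ℤ)-1)) N
        rw [show f (-1) = f (-((0:ℕ):ℤ)-1) by norm_num, ← h]
        apply Finset.sum_congr rfl
        intro j _
        simp only [hddef]
        have c1 : -((j:ℤ)+1) - 1 = -(((j+1 : ℕ)):ℤ) - 1 := by push_cast; ring
        have c2 : -((j:ℤ)+1) = -(j:ℤ) - 1 := by ring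
        rw [c1, c2]
      simp only [hptel]
      rw [show (0:ℂ) - f (-1) = (1 - 1/(1+0)) - f (-1) by norm_num]
      apply Tendsto.sub_const
      have hf1 : ∀ N : ℕ, f (-(N:ℤ)-1) = 1 - 1/(1 + q ^ (4*(N:ℤ)+2)) := by
        intro N
        rw [hflip (-(N:ℤ)-1), show -4*(-(N:ℤ)-1)-2 = 4*(N:ℤ)+2 by ring]
      simp only [hf1]
      apply Tendsto.const_sub
      apply Tendsto.div tendsto_const_nhds (tendsto_const_nhds.add (htend0 2))
      norm_num
  have hdsum : HasSum d (-1) := by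
    have h := hpos.of_nat_of_neg_add_one hneg
    convert h using 1
    ring
  -- shifted sums
  have hshift : ∀ j : ℕ, HasSum (fun m : ℤ => d (m - (j:ℤ))) (-1) := by
    intro j
    have h := ((Equiv.subRight ((j:ℤ))).hasSum_iff (f := d) (a := -1)).mpr hdsum
    exact h
  have hsum2 : HasSum (fun m : ℤ => (∑ j ∈ Finset.range k, d (m - (j:ℤ)))/V)
      (-(k:ℂ)/V) := by
    have h := hasSum_sum (f := fun (j : ℕ) (m : ℤ) => d (m - (j:ℤ)))
      (a := fun _ : ℕ => (-1 : ℂ)) (s := Finset.range k) (fun j _ => hshift j)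
    have h2 := h.div_const V
    convert h2 using 2
    rfl
    simp
  -- termwise identity
  have hterm : ∀ m : ℤ,
      1 / ((q ^ (2 * m + 1) + q ^ (-2 * m - 1)) *
          (q ^ (2 * (m - (k:ℤ)) + 1) + q ^ (-2 * (m - (k:ℤ)) - 1)))
        = (∑ j ∈ Finset.range k, d (m - (j:ℤ))) / V := by
    intro m
    have htel : ∑ j ∈ Finset.range k, d (m - (j:ℤ)) = f (m - k) - f m := by
      have h := Finset.sum_range_sub (fun j : ℕ => f (m - (j:ℤ))) k
      rw [show f m = f (m - ((0:ℕ):ℤ)) by norm_num, ← h]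
      apply Finset.sum_congr rfl
      intro j _
      simp only [hddef]
      have e1 : m - (j:ℤ) - 1 = m - ((j+1 : ℕ) : ℤ) := by push_cast; ring
      rw [e1]
    rw [htel]
    -- zpow rewrites
    have hu : q ^ (2*m+1) ≠ 0 := zpow_ne_zero _ hq0
    have hv : q ^ (2*(k:ℤ)) ≠ 0 := zpow_ne_zero _ hq0
    have e1 : q ^ (-2*m-1) = (q ^ (2*m+1))⁻¹ := by
      rw [show -2*m-1 = -(2*m+1) by ring, zpow_neg]
    have e2 : q ^ (2*(m-(k:ℤ))+1) = q ^ (2*m+1) * (q ^ (2*(k:ℤ)))⁻¹ := by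
      rw [← zpow_neg, ← zpow_add₀ hq0]
      congr 1
      ring
    have e3 : q ^ (-2*(m-(k:ℤ))-1) = (q ^ (2*m+1))⁻¹ * q ^ (2*(k:ℤ)) := by
      rw [← zpow_neg, ← zpow_add₀ hq0]
      congr 1
      ring
    have e4 : q ^ (4*m+2) = (q ^ (2*m+1))^2 := by
      rw [sq, ← zpow_add₀ hq0]
      congr 1
      ring
    have e5 : q ^ (4*(m-(k:ℤ))+2) = (q ^ (2*m+1) * (q ^ (2*(k:ℤ)))⁻¹)^2 := by
      rw [← e2, sq, ← zpow_add₀ hq0]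
      congr 1
      ring
    have h1 : 1 + (q ^ (2*m+1))^2 ≠ 0 := by
      rw [← e4]
      exact hne _ (by omega)
    have h2 : (q ^ (2*m+1))^2 + (q ^ (2*(k:ℤ)))^2 ≠ 0 := by
      have h5 : 1 + (q ^ (2*m+1) * (q ^ (2*(k:ℤ)))⁻¹)^2 ≠ 0 := by
        rw [← e5]
        exact hne _ (by omega)
      have h6 := mul_ne_zero (pow_ne_zero 2 hv) h5
      intro h7
      apply h6
      field_simp
      linear_combination h7
    have h3 : (q ^ (2*(k:ℤ)))^2 - 1 ≠ 0 := by
      rw [hv2]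
      exact sub_ne_zero.mpr hq4k
    rw [hfdef]
    simp only
    rw [e1, e2, e3, e4, e5, hVdef, hvinv]
    exact alg_core _ _ hu hv h1 h2 h3
  -- conclude
  rw [show (fun m : ℤ => 1 / ((q ^ (2 * m + 1) + q ^ (-2 * m - 1)) *
          (q ^ (2 * (m - (k:ℤ)) + 1) + q ^ (-2 * (m - (k:ℤ)) - 1))))
        = fun m : ℤ => (∑ j ∈ Finset.range k, d (m - (j:ℤ))) / V from funext hterm]
  exact hsum2.tsum_eq
end
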